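/- Let Y = {Y_1,…,Y_s} be a partition of H and Z = {Z_1,…,Z_t} be a partition of N, with Z_{k*} a block of Z of maximal size. If there exists a resolute refinement of the Pareto social choice correspondence Par which is Y-anonymous and Z-neutral, then gcd( gcd(|Y_1|,…,|Y_s|), (|Z_{k*}|)! ) = 1. -/

import Mathlib

/-!
Common framework: preferences on `n ≥ 2` alternatives (`Fin n`) expressed by `h ≥ 2`
individuals (`Fin h`).  Following the paper, a linear order `q ∈ L(N)` is identified with
the permutation of `Fin n` sending each rank position (`0` = best) to the alternative
occupying that position.
-/

/-- A preference relation (a linear order on the set `Fin n` of alternatives), identified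
with the permutation sending each rank position (`0` = best) to the alternative at
that position. -/
abbrev Pref (n : ℕ) := Equiv.Perm (Fin n)

/-- `x ⪰_q y` : alternative `x` is weakly preferred to `y` in `q`. -/
def prefGE {n : ℕ} (q : Pref n) (x y : Fin n) : Prop := q.symm x ≤ q.symm y

/-- `x ≻_q y` : alternative `x` is strictly preferred to `y` in `q`. -/
def prefGT {n : ℕ} (q : Pref n) (x y : Fin n) : Prop := q.symm x < q.symm y

instance {n : ℕ} (q : Pref n) (x y : Fin n) : Decidable (prefGT q x y) :=
  inferInstanceAs (Decidable (q.symm x < q.symm y))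

/-- A preference profile: one preference relation for each individual. -/
abbrev Profile (n h : ℕ) := Fin h → Pref n

/-- A social choice correspondence (the nonemptiness of its values is `IsSCC`). -/
abbrev SCC (n h : ℕ) := Profile n h → Set (Fin n)

/-- `C` has nonempty values, i.e. `C` really is a social choice correspondence. -/
def IsSCC {n h : ℕ} (C : SCC n h) : Prop := ∀ p, (C p).Nonempty

/-- `C` is resolute: it always selects exactly one alternative. -/
def Resolute {n h : ℕ} (C : SCC n h) : Prop := ∀ p, ∃ x, C p = {x}

/-- `C'` is a refinement of `C`. -/
def Refines {n h : ℕ} (C' C : SCC n h) : Prop := ∀ p, C' p ⊆ C p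

/-- The order-reversing permutation `ρ₀ : r ↦ n - r + 1`. -/
def rho0 (n : ℕ) : Equiv.Perm (Fin n) := Fin.revPerm

/-- The profile `p^{(id,id,ρ₀)}` obtained from `p` by reversing every individual
preference. -/
def revProfile {n h : ℕ} (p : Profile n h) : Profile n h := fun i => p i * rho0 n

/-- `C` is immune to the reversal bias. -/
def Immune {n h : ℕ} (C : SCC n h) : Prop :=
  ∀ (p : Profile n h) (x : Fin n), C p = {x} → C (revProfile p) ≠ C p

/-- `Y` is a partition: nonempty, pairwise disjoint, covering blocks. -/
def IsPartition {α : Type*} {s : ℕ} (Y : Fin s → Finset α) : Prop :=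
  (∀ j, (Y j).Nonempty) ∧ (∀ j k, j ≠ k → Disjoint (Y j) (Y k)) ∧ (∀ a, ∃ j, a ∈ Y j)

/-- The Pareto social choice correspondence: `x` is selected iff no alternative
unanimously beats it, i.e. for every other `y` some individual prefers `x` to `y`. -/
def Par {n h : ℕ} : SCC n h :=
  fun p => {x | ∀ y, y ≠ x → ∃ i, prefGT (p i) x y}

/-- The profile `p^{(φ,ψ,ρ)}`: individual `i` is renamed `φ(i)`, alternative `x` is
renamed `ψ(x)`, ranks are moved by `ρ`. -/
def pact {n h : ℕ} (φ : Equiv.Perm (Fin h)) (ψ ρ : Equiv.Perm (Fin n))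
    (p : Profile n h) : Profile n h :=
  fun i => ψ * p (φ⁻¹ i) * ρ

/-- Anonymity with respect to the partition `Y` of the individuals. -/
def YAnonymous {n h s : ℕ} (Y : Fin s → Finset (Fin h)) (C : SCC n h) : Prop :=
  ∀ (p : Profile n h) (φ : Equiv.Perm (Fin h)),
    (∀ j, (Y j).image φ = Y j) → C (pact φ 1 1 p) = C p

/-- Neutrality with respect to the partition `Z` of the alternatives. -/
def ZNeutral {n h t : ℕ} (Z : Fin t → Finset (Fin n)) (C : SCC n h) : Prop :=
  ∀ (p : Profile n h) (ψ : Equiv.Perm (Fin n)),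
    (∀ k, (Z k).image ψ = Z k) → C (pact 1 ψ 1 p) = ψ '' C p


section Helpers

lemma image_eq_self_of_mapsTo {α : Type*} [DecidableEq α] {f : α → α} (hf : Function.Injective f)
    {s : Finset α} (h : ∀ x ∈ s, f x ∈ s) : s.image f = s :=
  Finset.eq_of_subset_of_card_le (Finset.image_subset_iff.mpr h)
    (by rw [Finset.card_image_of_injective _ hf])

lemma exists_shift {h s p : ℕ} [NeZero p] (Y : Fin s → Finset (Fin h)) (hY : IsPartition Y)
    (hd : ∀ j, p ∣ (Y j).card) :
    ∃ (φ : Equiv.Perm (Fin h)) (c : Fin h → Fin p),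
      (∀ j, (Y j).image φ = Y j) ∧ ∀ i, c (φ i) = c i + 1 := by
  classical
  obtain ⟨-, hdisj, hcov⟩ := hY
  choose blk hblk using hcov
  have blk_eq : ∀ {i : Fin h} {j : Fin s}, i ∈ Y j → blk i = j := by
    intro i j hij
    by_contra hne
    exact (Finset.disjoint_left.mp (hdisj _ _ hne) (hblk i)) hij
  have hcard : ∀ j, (Y j).card / p * p = (Y j).card := fun j => Nat.div_mul_cancel (hd j)
  let D : ∀ j, ↥(Y j) ≃ Fin ((Y j).card / p) × Fin p := fun j =>
    ((Y j).equivFin.trans (finCongr (hcard j).symm)).trans finProdFinEquiv.symm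
  let cval : ∀ j, ↥(Y j) → Fin p := fun j x => (D j x).2
  let step : ∀ j, ↥(Y j) → ↥(Y j) := fun j x => (D j).symm ((D j x).1, (D j x).2 + 1)
  have key : ∀ j x, D j (step j x) = ((D j x).1, (D j x).2 + 1) := fun j x =>
    (D j).apply_symm_apply _
  let F : Fin h → Fin h := fun i => (step (blk i) ⟨i, hblk i⟩ : Fin h)
  have hFmem : ∀ (j) (x : ↥(Y j)), (step j x : Fin h) ∈ Y j := fun j x => (step j x).2
  have hFblk : ∀ i, blk (F i) = blk i := fun i => blk_eq (hFmem _ _)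
  let stepdown : ∀ j, ↥(Y j) → ↥(Y j) := fun j x => (D j).symm ((D j x).1, (D j x).2 - 1)
  let G : Fin h → Fin h := fun i => (stepdown (blk i) ⟨i, hblk i⟩ : Fin h)
  have congr1 : ∀ {j j' : Fin s} (_ : j = j') (x : Fin h) (h1 : x ∈ Y j) (h2 : x ∈ Y j'),
      (stepdown j ⟨x, h1⟩ : Fin h) = (stepdown j' ⟨x, h2⟩ : Fin h) := by
    rintro j j' rfl x h1 h2; rfl
  have congr2 : ∀ {j j' : Fin s} (_ : j = j') (x : Fin h) (h1 : x ∈ Y j) (h2 : x ∈ Y j'),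
      cval j ⟨x, h1⟩ = cval j' ⟨x, h2⟩ := by
    rintro j j' rfl x h1 h2; rfl
  have hGF : ∀ i, G (F i) = i := by
    intro i
    show (stepdown (blk (F i)) ⟨F i, hblk (F i)⟩ : Fin h) = i
    rw [congr1 (hFblk i) (F i) (hblk (F i)) (hFmem _ _)]
    show ((D (blk i)).symm _ : Fin h) = i
    have : (⟨F i, hFmem _ _⟩ : ↥(Y (blk i))) = step (blk i) ⟨i, hblk i⟩ := Subtype.ext rfl
    rw [this, key]
    simp
  have hinj : Function.Injective F := Function.LeftInverse.injective hGF
  let φ : Equiv.Perm (Fin h) := Equiv.ofBijective F (Finite.injective_iff_bijective.mp hinj)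
  let c : Fin h → Fin p := fun i => cval (blk i) ⟨i, hblk i⟩
  refine ⟨φ, c, ?_, ?_⟩
  · intro j
    refine image_eq_self_of_mapsTo φ.injective ?_
    intro x hx
    have : blk x = j := blk_eq hx
    show F x ∈ Y j
    rw [← this]
    exact hFmem _ _
  · intro i
    show cval (blk (F i)) ⟨F i, hblk (F i)⟩ = c i + 1
    rw [congr2 (hFblk i) (F i) (hblk (F i)) (hFmem _ _)]
    show (D (blk i) ⟨F i, hFmem _ _⟩).2 = c i + 1
    have : (⟨F i, hFmem _ _⟩ : ↥(Y (blk i))) = step (blk i) ⟨i, hblk i⟩ := Subtype.ext rfl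
    rw [this, key]

lemma exists_rank {n p : ℕ} (A : Finset (Fin n)) (hA : A.card = p) (hpn : p ≤ n) :
    ∃ q : Equiv.Perm (Fin n), ∀ x, x ∈ A ↔ ((q.symm x : Fin n) : ℕ) < p := by
  classical
  have hcompl : Aᶜ.card = n - p := by
    rw [Finset.card_compl, hA]; simp
  let eA : ↥A ≃ Fin p := A.equivFin.trans (finCongr hA)
  let eB : {x : Fin n // ¬ x ∈ A} ≃ Fin (n - p) :=
    ((Equiv.subtypeEquivRight (fun x => (Finset.mem_compl (s := A)).symm)).trans
      Aᶜ.equivFin).trans (finCongr hcompl)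
  let σ : Fin n ≃ Fin n :=
    ((Equiv.sumCompl (· ∈ A)).symm.trans
      ((eA.sumCongr eB).trans (finSumFinEquiv.trans (finCongr (by omega)))))
  refine ⟨σ.symm, fun x => ?_⟩
  rw [Equiv.symm_symm]
  constructor
  · intro hx
    show ((σ x : Fin n) : ℕ) < p
    simp only [σ, Equiv.trans_apply]
    rw [Equiv.sumCompl_symm_apply_of_pos hx]
    simp only [Equiv.sumCongr_apply, Sum.map_inl, finSumFinEquiv_apply_left, finCongr_apply,
      Fin.coe_cast, Fin.coe_castAdd]
    exact (eA ⟨x, hx⟩).2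
  · intro hlt
    by_contra hx
    have : ((σ x : Fin n) : ℕ) = p + (eB ⟨x, hx⟩ : ℕ) := by
      simp only [σ, Equiv.trans_apply]
      rw [Equiv.sumCompl_symm_apply_of_neg hx]
      simp only [Equiv.sumCongr_apply, Sum.map_inr, finSumFinEquiv_apply_right, finCongr_apply,
        Fin.coe_cast, Fin.coe_natAdd]
    omega

end Helpers

/-- Theorem `super`(i): if the Pareto scc admits a resolute refinement
which is `Y`-anonymous and `Z`-neutral, then
`gcd(gcd(|Y_1|,…,|Y_s|), (|Z_{k*}|)!) = 1`. -/
theorem statement0 {h n s t : ℕ} (hh : 2 ≤ h) (hn : 2 ≤ n)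
    (Y : Fin s → Finset (Fin h)) (hY : IsPartition Y)
    (Z : Fin t → Finset (Fin n)) (hZ : IsPartition Z)
    (kstar : Fin t) (hks : ∀ k, (Z k).card ≤ (Z kstar).card)
    (C : SCC n h) (hres : Resolute C) (href : Refines C Par)
    (hanon : YAnonymous Y C) (hneut : ZNeutral Z C) :
    Nat.gcd (Finset.univ.gcd fun j => (Y j).card) (Nat.factorial (Z kstar).card) = 1 := by
  classical
  by_contra hgcd
  obtain ⟨p, hp, hpdvd⟩ := Nat.exists_prime_and_dvd hgcd
  haveI : NeZero p := ⟨hp.pos.ne'⟩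
  have hpY : ∀ j, p ∣ (Y j).card := fun j =>
    (hpdvd.trans (Nat.gcd_dvd_left _ _)).trans (Finset.gcd_dvd (Finset.mem_univ j))
  have hpm : p ≤ (Z kstar).card :=
    (Nat.Prime.dvd_factorial hp).mp (hpdvd.trans (Nat.gcd_dvd_right _ _))
  -- the cyclic set A inside Z kstar
  obtain ⟨A, hAsub, hAcard⟩ := Finset.exists_subset_card_eq hpm
  set l : List (Fin n) := A.toList with hl
  have hnodup : l.Nodup := A.nodup_toList
  have hlen : l.length = p := by rw [hl, Finset.length_toList, hAcard]
  have hmeml : ∀ x : Fin n, x ∈ l ↔ x ∈ A := fun x => Finset.mem_toList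
  set ψ : Equiv.Perm (Fin n) := l.formPerm with hψ
  have hfix : ∀ x ∉ A, ψ x = x := fun x hx =>
    List.formPerm_apply_of_notMem (fun hc => hx ((hmeml x).mp hc))
  have hmemA : ∀ x ∈ A, ψ x ∈ A := fun x hx =>
    (hmeml _).mp (List.formPerm_apply_mem_of_mem ((hmeml x).mpr hx))
  have hne : ∀ x ∈ A, ψ x ≠ x := fun x hx =>
    (List.formPerm_apply_mem_ne_self_iff _ hnodup _ ((hmeml x).mpr hx)).mpr
      (by rw [hlen]; exact hp.two_le)
  have hpow : ψ ^ p = 1 := by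
    rw [← hlen]; exact List.formPerm_pow_length_eq_one_of_nodup _ hnodup
  have hinv_mem : ∀ x ∈ A, ψ⁻¹ x ∈ A := by
    intro x hx
    by_contra hxn
    have h1 : ψ (ψ⁻¹ x) = ψ⁻¹ x := hfix _ hxn
    rw [show ψ (ψ⁻¹ x) = x from ψ.apply_symm_apply x] at h1
    exact hxn (h1 ▸ hx)
  have hinv_fix : ∀ x ∉ A, ψ⁻¹ x = x := by
    intro x hx
    conv_lhs => rw [← hfix x hx]
    exact ψ.symm_apply_apply x
  have hr_mem : ∀ (r : ℕ) (x : Fin n), x ∈ A → (ψ ^ r)⁻¹ x ∈ A := by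
    intro r
    induction r with
    | zero => intro x hx; simpa using hx
    | succ r ih =>
      intro x hx
      have : (ψ ^ (r + 1))⁻¹ x = (ψ ^ r)⁻¹ (ψ⁻¹ x) := by
        rw [pow_succ']; simp [mul_inv_rev]
      rw [this]
      exact ih _ (hinv_mem _ hx)
  have hr_fix : ∀ (r : ℕ) (x : Fin n), x ∉ A → (ψ ^ r)⁻¹ x = x := by
    intro r
    induction r with
    | zero => intro x _; simp
    | succ r ih =>
      intro x hx
      have : (ψ ^ (r + 1))⁻¹ x = (ψ ^ r)⁻¹ (ψ⁻¹ x) := by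
        rw [pow_succ']; simp [mul_inv_rev]
      rw [this, hinv_fix x hx, ih x hx]
  -- ψ preserves the blocks of Z
  have hψZ : ∀ k, (Z k).image ψ = Z k := by
    intro k
    refine image_eq_self_of_mapsTo ψ.injective ?_
    intro x hx
    by_cases hk : k = kstar
    · subst hk
      by_cases hxA : x ∈ A
      · exact hAsub (hmemA x hxA)
      · rw [hfix x hxA]; exact hx
    · have hxA : x ∉ A := fun hxA =>
        (Finset.disjoint_left.mp (hZ.2.1 k kstar hk) hx) (hAsub hxA)
      rw [hfix x hxA]; exact hx
  -- φ and c on individuals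
  obtain ⟨φ, c, hφY, hcφ⟩ := exists_shift Y hY hpY
  -- base order q : members of A occupy the top p positions
  have hpn' : p ≤ n := hpm.trans ((Finset.card_le_univ _).trans (by simp))
  obtain ⟨q, hq⟩ := exists_rank A hAcard hpn'
  -- the profile
  set P : Profile n h := fun i => ψ ^ ((c i : Fin p) : ℕ) * q with hP
  have powlem : ∀ a : Fin p, ψ ^ (((a + 1 : Fin p)) : ℕ) = ψ * ψ ^ ((a : Fin p) : ℕ) := by
    intro a
    have h1p : ((1 : Fin p) : ℕ) = 1 := by
      rw [Fin.val_one']; exact Nat.mod_eq_of_lt hp.two_le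
    have hval : ((a + 1 : Fin p) : ℕ) = (a.1 + 1) % p := by
      rw [Fin.val_add, h1p]
    rcases lt_or_eq_of_le (Nat.succ_le_of_lt a.2) with hlt | heq
    · rw [hval, Nat.mod_eq_of_lt hlt, pow_succ']
    · have heq2 : (a : ℕ) + 1 = p := heq
      rw [hval, heq2, Nat.mod_self]
      have h3 : ψ * ψ ^ (a : ℕ) = ψ ^ (a.1 + 1) := (pow_succ' ψ _).symm
      rw [h3, heq2, hpow, pow_zero]
  -- invariance of the profile
  have hinvar : pact φ ψ 1 P = P := by
    funext i
    show ψ * P (φ⁻¹ i) * 1 = P i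
    rw [mul_one]
    have hc : c i = c (φ⁻¹ i) + 1 := by
      conv_lhs => rw [← show φ (φ⁻¹ i) = i from φ.apply_symm_apply i]
      exact hcφ _
    show ψ * (ψ ^ ((c (φ⁻¹ i) : Fin p) : ℕ) * q) = ψ ^ ((c i : Fin p) : ℕ) * q
    rw [hc, powlem, mul_assoc]
  -- C P is ψ-invariant
  have horb : C P = ψ '' C P := by
    have e1 : pact 1 ψ 1 (pact φ 1 1 P) = pact φ ψ 1 P := by
      funext i; simp [pact]
    calc C P = C (pact φ ψ 1 P) := by rw [hinvar]
      _ = C (pact 1 ψ 1 (pact φ 1 1 P)) := by rw [e1]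
      _ = ψ '' C (pact φ 1 1 P) := hneut _ ψ hψZ
      _ = ψ '' C P := by rw [hanon P φ hφY]
  obtain ⟨x, hx⟩ := hres P
  have hψx : ψ x = x := by
    have h2 : ({x} : Set (Fin n)) = {ψ x} := by
      calc ({x} : Set (Fin n)) = C P := hx.symm
        _ = ψ '' C P := horb
        _ = ψ '' {x} := by rw [hx]
        _ = {ψ x} := Set.image_singleton
    exact (Set.singleton_eq_singleton_iff.mp h2).symm
  have hxA : x ∈ A := by
    by_contra hxA
    have hAne : A.Nonempty := Finset.card_pos.mp (by rw [hAcard]; exact hp.pos)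
    obtain ⟨a, ha⟩ := hAne
    have hax : a ≠ x := fun e => hxA (e ▸ ha)
    have hxPar : x ∈ Par P := href P (by rw [hx]; exact Set.mem_singleton x)
    obtain ⟨i, hi⟩ := hxPar a hax
    -- but a strictly beats x in every preference of the profile
    have hsymm : ∀ z, (P i).symm z = q.symm ((ψ ^ ((c i : Fin p) : ℕ))⁻¹ z) := fun z => rfl
    have h2 : prefGT (P i) a x := by
      show (P i).symm a < (P i).symm x
      rw [hsymm, hsymm, hr_fix _ x hxA]
      have hmem : (ψ ^ ((c i : Fin p) : ℕ))⁻¹ a ∈ A := hr_mem _ a ha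
      have hlt : ((q.symm ((ψ ^ ((c i : Fin p) : ℕ))⁻¹ a) : Fin n) : ℕ) < p := (hq _).mp hmem
      have hge : ¬ ((q.symm x : Fin n) : ℕ) < p := fun hc => hxA ((hq x).mpr hc)
      rw [Fin.lt_def]
      omega
    exact lt_asymm h2 hi
  exact hne x hxA hψx
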